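/- Let s > 0, let c_L, y₀ be real numbers with (1 − 1/s)² − 4c_L/s > 0, set Ξ = √((1 − 1/s)² − 4c_L/s), and assume |2y₀ − (1 − 1/s)| < Ξ. Let t₁ < t₂, let Ψ : ℝ → ℝ be a continuous function with Ψ(t) ≥ c_L for all t ∈ [t₁, t₂], and let y : ℝ → ℝ be differentiable on [t₁, t₂] with y(t₁) = y₀ and y′(t) = (s − 1)·y(t) − s·y(t)² − Ψ(t) for all t ∈ [t₁, t₂]. Then y(t) ≤ T(t − t₁ | y₀, s, c_L) for all t ∈ [t₁, t₂], where T is the tanh-formula with parameters (y₀, s, c_L). -/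

import Mathlib

/-- The real inverse hyperbolic tangent, `arctanh x = ½ log((1+x)/(1-x))`,
defined for `x ∈ (-1, 1)`. -/
noncomputable def arctanh (x : ℝ) : ℝ := (1 / 2) * Real.log ((1 + x) / (1 - x))

/-- The tanh-formula `T(t | y₀, s, c)`. -/
noncomputable def tanhFormula (y₀ s c t : ℝ) : ℝ :=
  (1 / 2) * (1 - 1 / s) +
    (Real.sqrt ((1 - 1 / s) ^ 2 - 4 * c / s) / 2) *
      Real.tanh ((s * Real.sqrt ((1 - 1 / s) ^ 2 - 4 * c / s) / 2) * t +
        arctanh ((2 * y₀ - (1 - 1 / s)) / Real.sqrt ((1 - 1 / s) ^ 2 - 4 * c / s)))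

lemma my_hasDerivAt_tanh (x : ℝ) : HasDerivAt Real.tanh (1 - Real.tanh x ^ 2) x := by
  have h := (Real.hasDerivAt_sinh x).div (Real.hasDerivAt_cosh x) (Real.cosh_pos x).ne'
  have heq : Real.tanh = fun z => Real.sinh z / Real.cosh z :=
    funext fun z => Real.tanh_eq_sinh_div_cosh z
  rw [heq]
  refine h.congr_deriv ?_
  have hc := Real.cosh_sq_sub_sinh_sq x
  have hpos := (Real.cosh_pos x).ne'
  field_simp

lemma tanh_arctanh {x : ℝ} (h : |x| < 1) : Real.tanh (arctanh x) = x := by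
  obtain ⟨h1, h2⟩ := abs_lt.mp h
  have hq : 0 < (1 + x) / (1 - x) := div_pos (by linarith) (by linarith)
  have hE2 : Real.exp (arctanh x) * Real.exp (arctanh x) = (1 + x) / (1 - x) := by
    rw [← Real.exp_add, ← Real.exp_log hq, arctanh]
    ring_nf
  have hEpos : 0 < Real.exp (arctanh x) := Real.exp_pos _
  have h1x : (1 : ℝ) - x ≠ 0 := by linarith
  rw [Real.tanh_eq_sinh_div_cosh, Real.sinh_eq, Real.cosh_eq, Real.exp_neg]
  rw [div_eq_iff (by positivity)]
  field_simp at hE2 ⊢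
  nlinarith [hE2]

lemma tanhFormula_hasDerivAt (y₀ s c : ℝ) (hs : 0 < s)
    (hd : 0 ≤ (1 - 1 / s) ^ 2 - 4 * c / s) (t : ℝ) :
    HasDerivAt (tanhFormula y₀ s c)
      ((s - 1) * tanhFormula y₀ s c t - s * (tanhFormula y₀ s c t) ^ 2 - c) t := by
  set m : ℝ := 1 - 1 / s with hm
  set Ξ : ℝ := Real.sqrt (m ^ 2 - 4 * c / s) with hΞ
  set Ω : ℝ := arctanh ((2 * y₀ - m) / Ξ) with hΩ
  have hΞ2 : Ξ ^ 2 = m ^ 2 - 4 * c / s := Real.sq_sqrt hd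
  have hsm : s * m = s - 1 := by rw [hm]; field_simp
  have hu : HasDerivAt (fun t : ℝ => s * Ξ / 2 * t + Ω) (s * Ξ / 2) t := by
    simpa using ((hasDerivAt_id t).const_mul (s * Ξ / 2)).add_const Ω
  have htanh := (my_hasDerivAt_tanh (s * Ξ / 2 * t + Ω)).comp t hu
  have hT : HasDerivAt (tanhFormula y₀ s c)
      (Ξ / 2 * ((1 - Real.tanh (s * Ξ / 2 * t + Ω) ^ 2) * (s * Ξ / 2))) t := by
    have := (htanh.const_mul (Ξ / 2)).const_add ((1 / 2) * m)
    exact this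
  convert hT using 1
  set τ := Real.tanh (s * Ξ / 2 * t + Ω) with hτ
  have hTval : tanhFormula y₀ s c t = (1 / 2) * m + Ξ / 2 * τ := rfl
  clear_value τ Ω Ξ m
  rw [hTval]
  have hΞ2' : s * Ξ ^ 2 = s * m ^ 2 - 4 * c := by
    rw [hΞ2]; field_simp
  linear_combination (-(m / 2 + Ξ / 2 * τ)) * hsm - (1 / 4) * hΞ2'

lemma tanhFormula_zero (y₀ s c : ℝ) (hd : 0 < (1 - 1 / s) ^ 2 - 4 * c / s)
    (hy₀ : |2 * y₀ - (1 - 1 / s)| < Real.sqrt ((1 - 1 / s) ^ 2 - 4 * c / s)) :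
    tanhFormula y₀ s c 0 = y₀ := by
  have hΞ : 0 < Real.sqrt ((1 - 1 / s) ^ 2 - 4 * c / s) := Real.sqrt_pos.mpr hd
  unfold tanhFormula
  rw [mul_zero, zero_add, tanh_arctanh (by rw [abs_div, abs_of_pos hΞ]; exact (div_lt_one hΞ).mpr hy₀)]
  field_simp
  ring

open Set Filter Topology

/-- If the remainder `Ψ` is bounded below by `c_L` on `[t₁, t₂]` and `y` solves
`y' = (s-1)y - sy² - Ψ(t)` there with `y(t₁) = y₀`, then
`y(t) ≤ T(t - t₁ | y₀, s, c_L)` on `[t₁, t₂]`. -/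
theorem prevalence_upper_bound (s cL y₀ t₁ t₂ : ℝ) (hs : 0 < s)
    (hdisc : 0 < (1 - 1 / s) ^ 2 - 4 * cL / s)
    (hy₀ : |2 * y₀ - (1 - 1 / s)| < Real.sqrt ((1 - 1 / s) ^ 2 - 4 * cL / s))
    (ht : t₁ < t₂) (Ψ : ℝ → ℝ) (hΨcont : Continuous Ψ)
    (hΨ : ∀ t ∈ Set.Icc t₁ t₂, cL ≤ Ψ t)
    (y : ℝ → ℝ) (hinit : y t₁ = y₀)
    (hode : ∀ t ∈ Set.Icc t₁ t₂,
      HasDerivWithinAt y ((s - 1) * y t - s * (y t) ^ 2 - Ψ t) (Set.Icc t₁ t₂) t) :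
    ∀ t ∈ Set.Icc t₁ t₂, y t ≤ tanhFormula y₀ s cL (t - t₁) := by
  set T : ℝ → ℝ := fun t => tanhFormula y₀ s cL (t - t₁) with hTdef
  have hTd : ∀ t, HasDerivAt T ((s - 1) * T t - s * (T t) ^ 2 - cL) t := by
    intro t
    have h := (tanhFormula_hasDerivAt y₀ s cL hs hdisc.le (t - t₁)).comp t
      ((hasDerivAt_id t).sub_const t₁)
    simpa [hTdef, Function.comp_def] using h
  have hT0 : T t₁ = y₀ := by
    simp only [hTdef, sub_self]
    exact tanhFormula_zero y₀ s cL hdisc hy₀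
  have hTcont : Continuous T := by
    exact continuous_iff_continuousAt.mpr fun t => (hTd t).continuousAt
  have hycont : ContinuousOn y (Icc t₁ t₂) := fun t htx =>
    (hode t htx).continuousWithinAt
  set g : ℝ → ℝ := fun t => y t - T t with hgdef
  set gd : ℝ → ℝ := fun t =>
    ((s - 1) * y t - s * (y t) ^ 2 - Ψ t) - ((s - 1) * T t - s * (T t) ^ 2 - cL) with hgddef
  have hgcont : ContinuousOn g (Icc t₁ t₂) := hycont.sub hTcont.continuousOn
  have hgd : ∀ t ∈ Icc t₁ t₂, HasDerivWithinAt g (gd t) (Icc t₁ t₂) t := fun t htx =>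
    (hode t htx).sub (hTd t).hasDerivWithinAt
  set L : ℝ → ℝ := fun t => (s - 1) - s * (y t + T t) with hLdef
  have hLg : ∀ t ∈ Icc t₁ t₂, gd t ≤ L t * g t := by
    intro t htx
    have h1 : gd t = L t * g t - (Ψ t - cL) := by
      simp only [hgddef, hLdef, hgdef]; ring
    have := hΨ t htx
    linarith
  have hLcont : ContinuousOn L (Icc t₁ t₂) :=
    continuousOn_const.sub (continuousOn_const.mul (hycont.add hTcont.continuousOn))
  obtain ⟨t0, ht0, hK'⟩ := isCompact_Icc.exists_isMaxOn ⟨t₁, left_mem_Icc.mpr ht.le⟩ hLcont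
  have hK : ∀ x ∈ Icc t₁ t₂, L x ≤ L t0 := hK'
  set K := L t0 with hKdef
  set f : ℝ → ℝ := fun t => max (g t) 0 with hfdef
  set fd : ℝ → ℝ := fun t => if 0 < g t then gd t else 0 with hfddef
  have key : ∀ x ∈ Icc t₁ t₂, f x ≤ gronwallBound 0 K 0 (x - t₁) := by
    apply le_gronwallBound_of_liminf_deriv_right_le (f' := fd)
    · exact fun x hx => (hgcont x hx).max continuousWithinAt_const
    · intro x hx r hr
      have hx2 : x < t₂ := hx.2
      have hxI : x ∈ Icc t₁ t₂ := ⟨hx.1, hx.2.le⟩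
      have hmono : 𝓝[>] x ≤ 𝓝[Icc t₁ t₂ \ {x}] x := by
        rw [← nhdsWithin_Ioc_eq_nhdsGT hx2]
        exact nhdsWithin_mono x fun z hz =>
          ⟨⟨hx.1.trans hz.1.le, hz.2⟩, ne_of_gt hz.1⟩
      have hmono' : 𝓝[>] x ≤ 𝓝[Icc t₁ t₂] x :=
        hmono.trans (nhdsWithin_mono x diff_subset)
      have hslope : Tendsto (fun z => (z - x)⁻¹ * (g z - g x)) (𝓝[>] x) (𝓝 (gd x)) := by
        have h1 := (hasDerivWithinAt_iff_tendsto_slope.mp (hgd x hxI)).mono_left hmono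
        refine h1.congr fun z => ?_
        simp [slope_def_field, div_eq_inv_mul]
      have hgc : Tendsto g (𝓝[>] x) (𝓝 (g x)) :=
        ((hgcont x hxI).mono_left hmono')
      have hevmem : ∀ᶠ z in 𝓝[>] x, x < z := eventually_mem_nhdsWithin
      by_cases hgx : 0 < g x
      · have hfd : fd x = gd x := if_pos hgx
        rw [hfd] at hr
        have ev1 : ∀ᶠ z in 𝓝[>] x, (z - x)⁻¹ * (g z - g x) < r :=
          hslope.eventually (gt_mem_nhds hr)
        have ev2 : ∀ᶠ z in 𝓝[>] x, 0 < g z := hgc.eventually (lt_mem_nhds hgx)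
        refine ((ev1.and ev2).mono ?_).frequently
        rintro z ⟨h1, h2⟩
        have : f z - f x = g z - g x := by
          simp [hfdef, max_eq_left h2.le, max_eq_left hgx.le]
        rw [this]; exact h1
      · have hfd : fd x = 0 := if_neg hgx
        rw [hfd] at hr
        rcases lt_or_eq_of_le (not_lt.mp hgx) with hlt | heq
        · have ev2 : ∀ᶠ z in 𝓝[>] x, g z < 0 := hgc.eventually (gt_mem_nhds hlt)
          refine (ev2.mono ?_).frequently
          intro z h2
          have : f z - f x = 0 := by
            simp [hfdef, max_eq_right h2.le, max_eq_right (not_lt.mp hgx)]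
          rw [this, mul_zero]; exact hr
        · have hgx0 : g x = 0 := heq
          have hgdle : gd x ≤ 0 := by
            have := hLg x hxI
            rw [hgx0, mul_zero] at this; exact this
          have ev1 : ∀ᶠ z in 𝓝[>] x, (z - x)⁻¹ * (g z - g x) < r :=
            hslope.eventually (gt_mem_nhds (lt_of_le_of_lt hgdle hr))
          refine ((ev1.and hevmem).mono ?_).frequently
          rintro z ⟨h1, h2⟩
          have hinv : 0 ≤ (z - x)⁻¹ := inv_nonneg.mpr (by linarith)
          have hfz : f z - f x = max (g z - g x) 0 := by
            simp [hfdef, hgx0, max_eq_right le_rfl]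
          rw [hfz, mul_max_of_nonneg _ _ hinv, mul_zero]
          exact max_lt h1 hr
    · simp [hfdef, hgdef, hinit, hT0]
    · intro x hx
      have hxI : x ∈ Icc t₁ t₂ := ⟨hx.1, hx.2.le⟩
      by_cases hgx : 0 < g x
      · have hfx : f x = g x := max_eq_left hgx.le
        rw [hfddef]
        simp only [if_pos hgx, hfx, add_zero]
        calc gd x ≤ L x * g x := hLg x hxI
          _ ≤ K * g x := mul_le_mul_of_nonneg_right (hK x hxI) hgx.le
      · have hfx : f x = 0 := max_eq_right (not_lt.mp hgx)
        rw [hfddef]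
        simp only [if_neg hgx, hfx, mul_zero, add_zero, le_refl]
  intro t htx
  have h1 := key t htx
  rw [gronwallBound_ε0_δ0] at h1
  have h2 : g t ≤ 0 := le_trans (le_max_left _ _) h1
  have h3 : y t - T t ≤ 0 := h2
  simp only [hTdef] at h3
  linarith
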